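/- arXiv:1806.06805 — 2 statements merged into one kernel-verified Lean document; each statement's English description precedes it below -/
import Mathlib

section
/- Assume a < b. Then the center of the sphere lies on the OZ-axis, i.e. x_c = 0 and y_c = 0, if and only if both −a² and −b² are roots of the characteristic polynomial f. -/
open Matrix Polynomial

/-- The 4×4 matrix of the elliptic paraboloid x²/a² + y²/b² - z = 0. -/
noncomputable def Pmat (a b : ℝ) : Matrix (Fin 4) (Fin 4) ℝ :=
  !![1/a^2, 0, 0, 0;
     0, 1/b^2, 0, 0;
     0, 0, 0, -(1/2 : ℝ);
     0, 0, -(1/2 : ℝ), 0]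

/-- The 4×4 matrix of the sphere (x-x_c)² + (y-y_c)² + (z-z_c)² = r². -/
noncomputable def Smat (xc yc zc r : ℝ) : Matrix (Fin 4) (Fin 4) ℝ :=
  !![1, 0, 0, -xc;
     0, 1, 0, -yc;
     0, 0, 1, -zc;
     -xc, -yc, -zc, xc^2 + yc^2 + zc^2 - r^2]

/-- The characteristic polynomial f(λ) = det(λP + S), as a real polynomial in λ. -/
noncomputable def charPoly (a b xc yc zc r : ℝ) : Polynomial ℝ :=
  Matrix.det ((X : Polynomial ℝ) • (Pmat a b).map C + (Smat xc yc zc r).map C)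

set_option maxHeartbeats 1000000 in
lemma det_fin_four' {R : Type*} [CommRing R] (M : Matrix (Fin 4) (Fin 4) R) :
    M.det =
      M 0 0 * (M 1 1 * (M 2 2 * M 3 3 - M 2 3 * M 3 2) - M 1 2 * (M 2 1 * M 3 3 - M 2 3 * M 3 1)
        + M 1 3 * (M 2 1 * M 3 2 - M 2 2 * M 3 1))
      - M 0 1 * (M 1 0 * (M 2 2 * M 3 3 - M 2 3 * M 3 2) - M 1 2 * (M 2 0 * M 3 3 - M 2 3 * M 3 0)
        + M 1 3 * (M 2 0 * M 3 2 - M 2 2 * M 3 0))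
      + M 0 2 * (M 1 0 * (M 2 1 * M 3 3 - M 2 3 * M 3 1) - M 1 1 * (M 2 0 * M 3 3 - M 2 3 * M 3 0)
        + M 1 3 * (M 2 0 * M 3 1 - M 2 1 * M 3 0))
      - M 0 3 * (M 1 0 * (M 2 1 * M 3 2 - M 2 2 * M 3 1) - M 1 1 * (M 2 0 * M 3 2 - M 2 2 * M 3 0)
        + M 1 2 * (M 2 0 * M 3 1 - M 2 1 * M 3 0)) := by
  simp [Matrix.det_succ_row_zero, Fin.sum_univ_succ, Matrix.det_fin_three, Fin.succAbove, Fin.succ, Fin.castSucc, Fin.castAdd, Fin.castLE]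
  ring

set_option maxHeartbeats 1000000 in
lemma eval_charPoly (a b xc yc zc r t : ℝ) :
    (charPoly a b xc yc zc r).eval t =
      (t/a^2+1)*((t/b^2+1)*((xc^2+yc^2+zc^2-r^2) - (t/2+zc)^2) - yc^2)
        - xc^2*(t/b^2+1) := by
  rw [charPoly, det_fin_four']
  simp [Pmat, Smat, Matrix.add_apply, Matrix.smul_apply, Matrix.map_apply,
    Matrix.cons_val_zero, Matrix.cons_val_one, Matrix.head_cons,
    Matrix.cons_val_two, Matrix.tail_cons, Matrix.cons_val_three, Matrix.vecHead, Matrix.vecTail, Function.comp]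
  ring

/-- for a < b, the center of the sphere lies on the OZ-axis iff
both -a² and -b² are characteristic roots. -/
theorem center_on_axis_iff_roots (a b r xc yc zc : ℝ)
    (ha : 0 < a) (hab : a < b) (hr : 0 < r) :
    (xc = 0 ∧ yc = 0) ↔
      ((charPoly a b xc yc zc r).IsRoot (-a^2) ∧
       (charPoly a b xc yc zc r).IsRoot (-b^2)) := by
  have ha' : (a:ℝ)^2 ≠ 0 := by positivity
  have hb0 : (0:ℝ) < b := lt_trans ha hab
  have hb' : (b:ℝ)^2 ≠ 0 := by positivity
  have hA : -a^2/a^2 + 1 = 0 := by field_simp; norm_num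
  have hB : -b^2/b^2 + 1 = 0 := by field_simp; norm_num
  have hBa : -a^2/b^2 + 1 > 0 := by
    have : a^2 < b^2 := by nlinarith
    rw [div_add' _ _ _ hb']
    apply div_pos <;> nlinarith
  have hAb : -b^2/a^2 + 1 < 0 := by
    have h1 : a^2 < b^2 := by nlinarith
    rw [div_add' _ _ _ ha']
    apply div_neg_of_neg_of_pos
    · linarith
    · positivity
  simp only [Polynomial.IsRoot, eval_charPoly, hA, hB, zero_mul, mul_zero,
    zero_sub, zero_mul, sub_zero, mul_neg]
  constructor
  · rintro ⟨hx, hy⟩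
    simp [hx, hy]
  · rintro ⟨h1, h2⟩
    constructor
    · have : xc^2 = 0 := by
        by_contra hx
        have : xc^2 > 0 := lt_of_le_of_ne (sq_nonneg _) (Ne.symm hx)
        nlinarith
      exact pow_eq_zero_iff (n := 2) (by norm_num) |>.mp this
    · have : yc^2 = 0 := by
        by_contra hy
        have : yc^2 > 0 := lt_of_le_of_ne (sq_nonneg _) (Ne.symm hy)
        nlinarith
      exact pow_eq_zero_iff (n := 2) (by norm_num) |>.mp this
end

section
/- Assume a < b and 2r ≤ a². Then −a² is a root of the characteristic polynomial f of multiplicity at least 3 if and only if x_c = 0, y_c = 0, z_c = a²/2 and r = a²/2. -/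
open Matrix Polynomial

lemma charPoly_eq (a b xc yc zc r : ℝ) (ha : a ≠ 0) (hb : b ≠ 0) :
    charPoly a b xc yc zc r =
      C (-(1/(4*a^2*b^2))) * X^4
    + C (-(zc + (a^2+b^2)/4)/(a^2*b^2)) * X^3
    + C ((xc^2+yc^2-r^2-(a^2+b^2)*zc-a^2*b^2/4)/(a^2*b^2)) * X^2
    + C ((b^2*xc^2+a^2*yc^2-(a^2+b^2)*r^2-a^2*b^2*zc)/(a^2*b^2)) * X
    + C (-r^2) := by
  apply Polynomial.funext
  intro t
  unfold charPoly Pmat Smat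
  simp [Matrix.det_succ_row_zero, Fin.sum_univ_succ, Matrix.smul_apply, smul_eq_mul,
    show (Fin.castSucc 0 : Fin 4) = 0 from rfl, show (Fin.castSucc 1 : Fin 4) = 1 from rfl,
    show (Fin.castSucc 2 : Fin 4) = 2 from rfl,
    show ((0:Fin 3).castSucc : Fin 4) = 0 from rfl, show ((1:Fin 3).castSucc : Fin 4) = 1 from rfl,
    show ((2:Fin 3).castSucc : Fin 4) = 2 from rfl, show (Fin.succAbove 3 2 : Fin 4) = 2 from rfl]
  field_simp
  ring

lemma charPoly_smul (a b xc yc zc r : ℝ) (ha : a ≠ 0) (hb : b ≠ 0) :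
    C (4*a^2*b^2) * charPoly a b xc yc zc r =
      C (-1 : ℝ) * X^4
    + C (-(4*zc + a^2 + b^2)) * X^3
    + C (4*(xc^2+yc^2-r^2) - 4*(a^2+b^2)*zc - a^2*b^2) * X^2
    + C (4*(b^2*xc^2+a^2*yc^2) - 4*(a^2+b^2)*r^2 - 4*a^2*b^2*zc) * X
    + C (-(4*a^2*b^2*r^2)) := by
  rw [charPoly_eq a b xc yc zc r ha hb]
  apply Polynomial.funext
  intro t
  simp only [eval_add, eval_mul, eval_pow, eval_X, eval_C]
  field_simp
  ring

lemma charPoly_special (a b : ℝ) (ha : a ≠ 0) (hb : b ≠ 0) :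
    charPoly a b 0 0 (a^2/2) (a^2/2) =
      C (-(1/(4*a^2*b^2))) * (X + C (a^2))^3 * (X + C (b^2)) := by
  rw [charPoly_eq a b 0 0 (a^2/2) (a^2/2) ha hb]
  apply Polynomial.funext
  intro t
  simp only [eval_add, eval_mul, eval_pow, eval_X, eval_C]
  field_simp
  ring

set_option maxHeartbeats 1000000 in
/-- (a < b, smallness) -a² is a root of f of multiplicity at least
3 iff x_c = 0, y_c = 0, z_c = a²/2 and r = a²/2. -/
theorem neg_a_sq_triple_root_iff (a b r xc yc zc : ℝ)
    (ha : 0 < a) (hab : a < b) (hr : 0 < r) (hsmall : 2*r ≤ a^2) :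
    3 ≤ rootMultiplicity (-a^2) (charPoly a b xc yc zc r) ↔
      (xc = 0 ∧ yc = 0 ∧ zc = a^2/2 ∧ r = a^2/2) := by
  have ha0 : a ≠ 0 := ne_of_gt ha
  have hb : (0:ℝ) < b := lt_trans ha hab
  have hb0 : b ≠ 0 := ne_of_gt hb
  have hba : a^2 < b^2 := by nlinarith
  have hf := charPoly_eq a b xc yc zc r ha0 hb0
  have hfne : charPoly a b xc yc zc r ≠ 0 := by
    intro h0
    have hc : (charPoly a b xc yc zc r).coeff 4 = -(1/(4*a^2*b^2)) := by
      rw [hf]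
      simp only [coeff_add, coeff_C_mul, coeff_X_pow, coeff_C, coeff_X]
      norm_num
    rw [h0, coeff_zero] at hc
    exact absurd hc.symm (neg_ne_zero.mpr (by positivity))
  rw [le_rootMultiplicity_iff hfne, map_neg, sub_neg_eq_add]
  constructor
  · rintro ⟨q, hq⟩
    have hq' : C (4*a^2*b^2) * charPoly a b xc yc zc r
        = (X + C (a^2))^3 * (C (4*a^2*b^2) * q) := by rw [hq]; ring
    rw [charPoly_smul a b xc yc zc r ha0 hb0] at hq'
    have e0 : ((C (-1 : ℝ) * X^4
        + C (-(4*zc + a^2 + b^2)) * X^3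
        + C (4*(xc^2+yc^2-r^2) - 4*(a^2+b^2)*zc - a^2*b^2) * X^2
        + C (4*(b^2*xc^2+a^2*yc^2) - 4*(a^2+b^2)*r^2 - 4*a^2*b^2*zc) * X
        + C (-(4*a^2*b^2*r^2)))).eval (-a^2) = 0 := by rw [hq']; simp
    have e1 : (derivative ((C (-1 : ℝ) * X^4
        + C (-(4*zc + a^2 + b^2)) * X^3
        + C (4*(xc^2+yc^2-r^2) - 4*(a^2+b^2)*zc - a^2*b^2) * X^2
        + C (4*(b^2*xc^2+a^2*yc^2) - 4*(a^2+b^2)*r^2 - 4*a^2*b^2*zc) * X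
        + C (-(4*a^2*b^2*r^2))))).eval (-a^2) = 0 := by
      rw [hq']; simp [derivative_mul, derivative_pow]
    have e2 : (derivative (derivative ((C (-1 : ℝ) * X^4
        + C (-(4*zc + a^2 + b^2)) * X^3
        + C (4*(xc^2+yc^2-r^2) - 4*(a^2+b^2)*zc - a^2*b^2) * X^2
        + C (4*(b^2*xc^2+a^2*yc^2) - 4*(a^2+b^2)*r^2 - 4*a^2*b^2*zc) * X
        + C (-(4*a^2*b^2*r^2)))))).eval (-a^2) = 0 := by
      rw [hq']; simp [derivative_mul, derivative_pow]
    simp only [derivative_add, derivative_mul, derivative_C_mul, derivative_X_pow,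
      derivative_X, derivative_C, eval_add, eval_mul, eval_pow, eval_X, eval_C,
      eval_neg, eval_natCast, mul_zero, zero_mul, add_zero, zero_add, mul_one,
      eval_one, eval_zero] at e0 e1 e2
    -- clean equations
    have E0 : a^2*xc^2*(a^2 - b^2) = 0 := by linear_combination (1/4) * e0
    have E1 : b^2*xc^2 - b^2*r^2 - a^2*yc^2 - 2*a^2*xc^2 + a^2*r^2 + a^2*b^2*zc
        - a^4*zc - a^4*b^2/4 + a^6/4 = 0 := by linear_combination (1/4) * e1
    have E2 : 2*yc^2 + 2*xc^2 - 2*r^2 - 2*b^2*zc + 4*a^2*zc + a^2*b^2 - (3/2)*a^4 = 0 := by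
      linear_combination (1/4) * e2
    have hxc : xc = 0 := by
      have h2 : xc^2 * (a^2*(a^2 - b^2)) = 0 := by linear_combination E0
      rcases mul_eq_zero.mp h2 with h | h
      · exact (pow_eq_zero_iff two_ne_zero).mp h
      · exact absurd h (by nlinarith)
    subst hxc
    have Ezc : a^4*zc = b^2*r^2 - a^4*b^2/4 + a^6/2 := by
      linear_combination E1 + (a^2/2)*E2
    have key : a^4*yc^2 = (b^2-a^2)^2*(r^2 - a^4/4) := by
      linear_combination (-a^2)*E1 + (b^2-a^2)*Ezc
    have hr2 : r^2 - a^4/4 ≤ 0 := by nlinarith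
    have hyc : yc = 0 := by
      have ha4 : (0:ℝ) < a^4 := by positivity
      have hR : (b^2-a^2)^2*(r^2 - a^4/4) ≤ 0 :=
        mul_nonpos_of_nonneg_of_nonpos (sq_nonneg _) hr2
      have hle : a^4*yc^2 ≤ a^4*0 := by rw [mul_zero]; linarith [key, hR]
      have hy2 : yc^2 ≤ 0 := le_of_mul_le_mul_left hle ha4
      have : yc^2 = 0 := le_antisymm hy2 (sq_nonneg yc)
      exact (pow_eq_zero_iff two_ne_zero).mp this
    subst hyc
    have hrval : r = a^2/2 := by
      have h0 : (b^2-a^2)^2*(r^2 - a^4/4) = 0 := by linear_combination -key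
      have h1 : r^2 - a^4/4 = 0 := by
        rcases mul_eq_zero.mp h0 with h | h
        · exact absurd h (pow_ne_zero 2 (sub_ne_zero.mpr (ne_of_gt hba)))
        · exact h
      have h2 : (r - a^2/2)*(r + a^2/2) = 0 := by linear_combination h1
      rcases mul_eq_zero.mp h2 with h | h
      · linarith
      · nlinarith
    subst hrval
    have hzc : zc = a^2/2 := by
      have h4 : a^4 ≠ 0 := by positivity
      have : a^4*zc = a^4*(a^2/2) := by linear_combination Ezc
      exact mul_left_cancel₀ h4 this
    exact ⟨rfl, rfl, hzc, rfl⟩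
  · rintro ⟨h1, h2, h3, h4⟩
    subst h1; subst h2; subst h3; subst h4
    refine ⟨C (-(1/(4*a^2*b^2))) * (X + C (b^2)), ?_⟩
    rw [charPoly_special a b ha0 hb0]
    ring
end
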